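/- Let M be a SEM, u a fixed context, and ≺_u a total order on the endogenous variables V. Then ≺_u satisfies condition Acyc1 for M in context u if and only if ≺_u satisfies condition Acyc2 for M in context u. -/

import Mathlib

namespace Causal

/-- A signature: exogenous variables `U`, endogenous variables `V`, a universe
of values `Val`, range functions `RU`, `RV`, and a set `Int` of allowed
interventions (partial assignments of in-range values to endogenous variables). -/
structure Signature : Type 1 where
  U : Type
  V : Type
  Val : Type
  RU : U → Set Val
  RV : V → Set Val
  RU_nonempty : ∀ Y, (RU Y).Nonempty
  RV_nonempty : ∀ X, (RV X).Nonempty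
  Int : Set (V → Option Val)
  Int_ok : ∀ I ∈ Int, ∀ X x, I X = some x → x ∈ RV X

variable {S : Signature}

/-- A finite signature: finitely many variables, each with finite range. -/
def Signature.IsFinite (S : Signature) : Prop :=
  Finite S.U ∧ Finite S.V ∧ (∀ Y, (S.RU Y).Finite) ∧ (∀ X, (S.RV X).Finite)

/-- An intervention is valid if it only sets variables to values in their ranges. -/
def ValidInt (S : Signature) (I : S.V → Option S.Val) : Prop :=
  ∀ X x, I X = some x → x ∈ S.RV X

/-- A universal signature: all (valid) interventions are allowed. -/
def Signature.Universal (S : Signature) : Prop :=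
  S.Int = {I | ValidInt S I}

/-- A context: an assignment of in-range values to the exogenous variables. -/
def Context (S : Signature) : Type := {u : S.U → S.Val // ∀ Y, u Y ∈ S.RU Y}

/-- An assignment of in-range values to the endogenous variables (an outcome). -/
def Assignment (S : Signature) : Type := {v : S.V → S.Val // ∀ X, v X ∈ S.RV X}

open Classical in
/-- `updInt I X x` is the intervention `I; X ← x`. -/
noncomputable def updInt (I : S.V → Option S.Val) (X : S.V) (x : S.Val) :
    S.V → Option S.Val :=
  fun Y => if Y = X then some x else I Y

/-- Events: Boolean combinations of primitive events `X = x` (with `x ∈ R(X)`). -/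
inductive Event (S : Signature) : Type where
  | tru : Event S
  | prim : (X : S.V) → (x : S.Val) → x ∈ S.RV X → Event S
  | not : Event S → Event S
  | and : Event S → Event S → Event S
  | or : Event S → Event S → Event S

namespace Event

def imp (a b : Event S) : Event S := Event.or (Event.not a) b

/-- Satisfaction of an event by an assignment. -/
def sat (v : Assignment S) : Event S → Prop
  | .tru => True
  | .prim X x _ => v.1 X = x
  | .not e => ¬ Event.sat v e
  | .and a b => Event.sat v a ∧ Event.sat v b
  | .or a b => Event.sat v a ∨ Event.sat v b

/-- Boolean evaluation of an event under an arbitrary valuation of its atoms;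
used to define propositional tautologies. -/
def evalB (val : S.V → S.Val → Bool) : Event S → Bool
  | .tru => true
  | .prim X x _ => val X x
  | .not e => !(Event.evalB val e)
  | .and a b => Event.evalB val a && Event.evalB val b
  | .or a b => Event.evalB val a || Event.evalB val b

/-- An event is a propositional tautology if it is true under every Boolean
valuation of its primitive events. -/
def Taut (e : Event S) : Prop := ∀ val, Event.evalB val e = true

/-- The value `x` of variable `X` is mentioned in the event. -/
def mentionsVal (X : S.V) (x : S.Val) : Event S → Prop
  | .tru => False
  | .prim X' x' _ => X' = X ∧ x' = x
  | .not e => Event.mentionsVal X x e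
  | .and a b => Event.mentionsVal X x a ∨ Event.mentionsVal X x b
  | .or a b => Event.mentionsVal X x a ∨ Event.mentionsVal X x b

def bigAnd (l : List (Event S)) : Event S := l.foldr Event.and Event.tru

def bigOr (l : List (Event S)) : Event S := l.foldr Event.or (Event.not Event.tru)

/-- The disjunction `⋁_{x ∈ l} X = x`. -/
def disjEq (X : S.V) (l : List {x : S.Val // x ∈ S.RV X}) : Event S :=
  bigOr (l.map fun x => Event.prim X x.1 x.2)

/-- The conjunction `⋀ X = x` over a list of (variable, value) pairs. -/
def conjEqL (l : List ((X : S.V) × {x : S.Val // x ∈ S.RV X})) : Event S :=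
  bigAnd (l.map fun p => Event.prim p.1 p.2.1 p.2.2)

/-- Conjunctive formulas: conjunctions of literals `X = x` and `X ≠ x`. -/
inductive Conjunctive : Event S → Prop
  | tru : Conjunctive Event.tru
  | eq (X x hx) : Conjunctive (Event.prim X x hx)
  | ne (X x hx) : Conjunctive (Event.not (Event.prim X x hx))
  | and {a b} : Conjunctive a → Conjunctive b → Conjunctive (Event.and a b)

/-- The set of conjuncts of a (conjunctive) formula. -/
def conjuncts : Event S → Set (Event S)
  | .tru => ∅
  | .and a b => Event.conjuncts a ∪ Event.conjuncts b
  | e => {e}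

/-- Membership in the restricted language: only named variables and named values. -/
def InLang (W : Set S.V) (R' : S.V → Set S.Val) : Event S → Prop
  | .tru => True
  | .prim X x _ => X ∈ W ∧ x ∈ R' X
  | .not e => Event.InLang W R' e
  | .and a b => Event.InLang W R' a ∧ Event.InLang W R' b
  | .or a b => Event.InLang W R' a ∧ Event.InLang W R' b

end Event

/-- Causal formulas: Boolean combinations of atomic formulas `[Y ← y]φ`
with `Y ← y` an allowed intervention and `φ` an event. -/
inductive CForm (S : Signature) : Type where
  | tru : CForm S
  | box : (I : S.V → Option S.Val) → I ∈ S.Int → Event S → CForm S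
  | not : CForm S → CForm S
  | and : CForm S → CForm S → CForm S
  | or : CForm S → CForm S → CForm S

namespace CForm

def imp (a b : CForm S) : CForm S := CForm.or (CForm.not a) b

def iff (a b : CForm S) : CForm S := CForm.and (imp a b) (imp b a)

/-- `⟨Y ← y⟩φ` abbreviates `¬[Y ← y]¬φ`. -/
def dia (I : S.V → Option S.Val) (hI : I ∈ S.Int) (e : Event S) : CForm S :=
  CForm.not (CForm.box I hI (Event.not e))

/-- Satisfaction of a causal formula at a context, relative to an outcome map `O`. -/
def sat (O : (I : S.V → Option S.Val) → I ∈ S.Int → Context S → Set (Assignment S))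
    (u : Context S) : CForm S → Prop
  | .tru => True
  | .box I hI e => ∀ v ∈ O I hI u, e.sat v
  | .not φ => ¬ CForm.sat O u φ
  | .and a b => CForm.sat O u a ∧ CForm.sat O u b
  | .or a b => CForm.sat O u a ∨ CForm.sat O u b

/-- Boolean evaluation of a causal formula under an arbitrary valuation of its
atomic formulas; used to define propositional tautologies. -/
def evalB (val : (S.V → Option S.Val) → Event S → Bool) : CForm S → Bool
  | .tru => true
  | .box I _ e => val I e
  | .not φ => !(CForm.evalB val φ)
  | .and a b => CForm.evalB val a && CForm.evalB val b
  | .or a b => CForm.evalB val a || CForm.evalB val b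

/-- A causal formula is an instance of a propositional tautology if it is true
under every Boolean valuation of its atomic formulas. -/
def Taut (φ : CForm S) : Prop := ∀ val, CForm.evalB val φ = true

/-- The value `x` of variable `X` is mentioned in the causal formula
(either in a primitive event or in an intervention). -/
def mentionsVal (X : S.V) (x : S.Val) : CForm S → Prop
  | .tru => False
  | .box I _ e => I X = some x ∨ e.mentionsVal X x
  | .not φ => CForm.mentionsVal X x φ
  | .and a b => CForm.mentionsVal X x a ∨ CForm.mentionsVal X x b
  | .or a b => CForm.mentionsVal X x a ∨ CForm.mentionsVal X x b

def bigAnd (l : List (CForm S)) : CForm S := l.foldr CForm.and CForm.tru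

def bigOr (l : List (CForm S)) : CForm S := l.foldr CForm.or (CForm.not CForm.tru)

/-- Membership in the restricted language `L_{W,R',I'}(S)`. -/
def InLang (W : Set S.V) (R' : S.V → Set S.Val) (I' : Set (S.V → Option S.Val)) :
    CForm S → Prop
  | .tru => True
  | .box I _ e => I ∈ I' ∧ e.InLang W R'
  | .not φ => CForm.InLang W R' I' φ
  | .and a b => CForm.InLang W R' I' a ∧ CForm.InLang W R' I' b
  | .or a b => CForm.InLang W R' I' a ∧ CForm.InLang W R' I' b

end CForm

/-- A structural equations model over `S`: each endogenous variable gets an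
equation determining its value from the values of all other variables
(formally, `F X u v` does not depend on `v X`). -/
structure SEM (S : Signature) where
  F : S.V → (S.U → S.Val) → (S.V → S.Val) → S.Val
  F_range : ∀ X uu vv, F X uu vv ∈ S.RV X
  F_indep_self : ∀ X uu vv vv', (∀ Y, Y ≠ X → vv Y = vv' Y) → F X uu vv = F X uu vv'

namespace SEM

/-- The outcomes of a SEM under an intervention: solutions of the modified equations. -/
def outcomes (M : SEM S) (u : Context S) (I : S.V → Option S.Val) :
    Set (Assignment S) :=
  {v | ∀ X, (∀ x, I X = some x → v.1 X = x) ∧ (I X = none → v.1 X = M.F X u.1 v.1)}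

def sat (M : SEM S) (u : Context S) (φ : CForm S) : Prop :=
  φ.sat (fun I _ u' => M.outcomes u' I) u

def Valid (M : SEM S) (φ : CForm S) : Prop := ∀ u, M.sat u φ

/-- `X` is independent of `Y` in context `uu`: the equation for `X` does not
depend on the value of `Y`. -/
def IndepAt (M : SEM S) (uu : S.U → S.Val) (X Y : S.V) : Prop :=
  ∀ vv vv', (∀ Z, Z ≠ Y → vv Z = vv' Z) → M.F X uu vv = M.F X uu vv'

/-- An acyclic (recursive) SEM. -/
def Acyclic (M : SEM S) : Prop :=
  ∀ u : Context S, ∃ lt : S.V → S.V → Prop, IsStrictTotalOrder S.V lt ∧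
    ∀ X Y, lt X Y → M.IndepAt u.1 X Y

end SEM

/-- A generalized structural equations model: an arbitrary (effective) map from
allowed interventions and contexts to sets of outcomes. -/
structure GSEM (S : Signature) where
  F : (I : S.V → Option S.Val) → I ∈ S.Int → Context S → Set (Assignment S)
  effective : ∀ I hI u v, v ∈ F I hI u → ∀ X x, I X = some x → v.1 X = x

namespace GSEM

def sat (M : GSEM S) (u : Context S) (φ : CForm S) : Prop :=
  φ.sat M.F u

def Valid (M : GSEM S) (φ : CForm S) : Prop := ∀ u, M.sat u φ

/-- A finitary GSEM: all outcome sets are finite. -/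
def Finitary (M : GSEM S) : Prop := ∀ I hI u, (M.F I hI u).Finite

end GSEM

/-- Equivalence of two GSEMs: same outcomes for all contexts and allowed interventions. -/
def GSEM.equiv (M M' : GSEM S) : Prop := ∀ I hI u, M.F I hI u = M'.F I hI u

/-- `L(S)`-equivalence of two GSEMs: they agree on all causal formulas. -/
def GSEM.LEquiv (M M' : GSEM S) : Prop := ∀ u φ, M.sat u φ ↔ M'.sat u φ

/-- Equivalence of a SEM and a GSEM. -/
def SEM.equivGSEM (M : SEM S) (M' : GSEM S) : Prop :=
  ∀ (I : S.V → Option S.Val) (hI : I ∈ S.Int) (u : Context S),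
    M.outcomes u I = M'.F I hI u

/-- The projection of an outcome set to a single variable. -/
def projSet (T : Set (Assignment S)) (Y : S.V) : Set S.Val := (fun v => v.1 Y) '' T

/-- The restriction of an outcome set to a set of variables. -/
def restrictSet (T : Set (Assignment S)) (Wv : Set S.V) : Set (Wv → S.Val) :=
  (fun (v : Assignment S) (Y : Wv) => v.1 Y.1) '' T

/-! ### Axiom schemas -/

/-- D0: all instances of propositional tautologies. -/
def AxD0 (S : Signature) : Set (CForm S) := {φ | φ.Taut}

/-- D1 (functionality): `[Y ← y](X = x ⇒ X ≠ x')` for `x ≠ x'`. -/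
def AxD1 (S : Signature) : Set (CForm S) :=
  {φ | ∃ (I : S.V → Option S.Val) (hI : I ∈ S.Int) (X : S.V) (x x' : S.Val)
      (hx : x ∈ S.RV X) (hx' : x' ∈ S.RV X), x ≠ x' ∧
    φ = CForm.box I hI (Event.imp (Event.prim X x hx) (Event.not (Event.prim X x' hx')))}

/-- D2 (definiteness): `[Y ← y](⋁_{x ∈ R(X)} X = x)`. -/
def AxD2 (S : Signature) : Set (CForm S) :=
  {φ | ∃ (I : S.V → Option S.Val) (hI : I ∈ S.Int) (X : S.V)
      (l : List {x : S.Val // x ∈ S.RV X}),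
    (∀ x : {x : S.Val // x ∈ S.RV X}, x ∈ l) ∧ φ = CForm.box I hI (Event.disjEq X l)}

/-- D3 (composition): `⟨X ← x⟩(W = w ∧ φ) ⇒ ⟨X ← x; W ← w⟩φ`. -/
def AxD3 (S : Signature) : Set (CForm S) :=
  {ψ | ∃ (I : S.V → Option S.Val) (hI : I ∈ S.Int) (W : S.V) (w : S.Val)
      (hw : w ∈ S.RV W) (hIW : updInt I W w ∈ S.Int) (e : Event S),
    ψ = CForm.imp (CForm.dia I hI (Event.and (Event.prim W w hw) e))
          (CForm.dia (updInt I W w) hIW e)}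

/-- D4 (effectiveness): `[X ← x](X = x)`. -/
def AxD4 (S : Signature) : Set (CForm S) :=
  {φ | ∃ (I : S.V → Option S.Val) (hI : I ∈ S.Int) (X : S.V) (x : S.Val)
      (hx : x ∈ S.RV X), I X = some x ∧ φ = CForm.box I hI (Event.prim X x hx)}

/-- D5 (reversibility), with `Z = V − (X ∪ {W, Y})`. -/
def AxD5 (S : Signature) : Set (CForm S) :=
  {φ | ∃ (I : S.V → Option S.Val) (hI : I ∈ S.Int) (Y : S.V) (y : S.Val)
      (hy : y ∈ S.RV Y) (W : S.V) (w : S.Val) (hw : w ∈ S.RV W)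
      (hIY : updInt I Y y ∈ S.Int) (hIW : updInt I W w ∈ S.Int)
      (lZ : List ((X : S.V) × {x : S.Val // x ∈ S.RV X})),
    (lZ.map Sigma.fst).Nodup ∧
    (∀ Z : S.V, (∃ p ∈ lZ, p.1 = Z) ↔ (I Z = none ∧ Z ≠ W ∧ Z ≠ Y)) ∧
    φ = CForm.imp
      (CForm.and
        (CForm.dia (updInt I Y y) hIY (Event.and (Event.prim W w hw) (Event.conjEqL lZ)))
        (CForm.dia (updInt I W w) hIW (Event.and (Event.prim Y y hy) (Event.conjEqL lZ))))
      (CForm.dia I hI (Event.and (Event.prim W w hw)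
        (Event.and (Event.prim Y y hy) (Event.conjEqL lZ))))}

/-- A disjunct of the formula `Y ⇝ Z` ("Y affects Z"). -/
noncomputable def ltComp (I : S.V → Option S.Val) (hI : I ∈ S.Int) (Y : S.V) (y : S.Val)
    (hIY : updInt I Y y ∈ S.Int) (Z : S.V) (z z' : S.Val)
    (hz : z ∈ S.RV Z) (hz' : z' ∈ S.RV Z) : CForm S :=
  CForm.and (CForm.box I hI (Event.prim Z z hz))
    (CForm.box (updInt I Y y) hIY (Event.prim Z z' hz'))

/-- `φ` is (an instance of) the formula `Y ⇝ Z`: the disjunction, over all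
interventions `X ← x`, values `y ∈ R(Y)` and `z ≠ z' ∈ R(Z)`, of
`[X ← x](Z = z) ∧ [X ← x; Y ← y](Z = z')`. -/
def IsLeadsTo (Y Z : S.V) (φ : CForm S) : Prop :=
  ∃ l : List (CForm S),
    (∀ ψ ∈ l, ∃ (I : S.V → Option S.Val) (hI : I ∈ S.Int) (y : S.Val)
        (_ : y ∈ S.RV Y) (hIY : updInt I Y y ∈ S.Int) (z z' : S.Val)
        (hz : z ∈ S.RV Z) (hz' : z' ∈ S.RV Z), z ≠ z' ∧
        ψ = ltComp I hI Y y hIY Z z z' hz hz') ∧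
    (∀ (I : S.V → Option S.Val) (hI : I ∈ S.Int) (y : S.Val), y ∈ S.RV Y →
      ∀ (hIY : updInt I Y y ∈ S.Int) (z z' : S.Val) (hz : z ∈ S.RV Z)
        (hz' : z' ∈ S.RV Z), z ≠ z' →
        ltComp I hI Y y hIY Z z z' hz hz' ∈ l) ∧
    φ = CForm.bigOr l

/-- D6 (recursiveness): `(X₀ ⇝ X₁ ∧ … ∧ X_{k−1} ⇝ X_k) ⇒ ¬(X_k ⇝ X₀)`. -/
def AxD6 (S : Signature) : Set (CForm S) :=
  {φ | ∃ (k : ℕ) (Xs : Fin (k+1) → S.V) (fs : Fin k → CForm S) (g : CForm S),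
    (∀ i : Fin k, IsLeadsTo (Xs i.castSucc) (Xs i.succ) (fs i)) ∧
    IsLeadsTo (Xs (Fin.last k)) (Xs 0) g ∧
    φ = CForm.imp (CForm.bigAnd (List.ofFn fs)) (CForm.not g)}

/-- D7 (distribution): `([X ← x]φ ∧ [X ← x](φ ⇒ ψ)) ⇒ [X ← x]ψ`. -/
def AxD7 (S : Signature) : Set (CForm S) :=
  {φ | ∃ (I : S.V → Option S.Val) (hI : I ∈ S.Int) (a b : Event S),
    φ = CForm.imp (CForm.and (CForm.box I hI a) (CForm.box I hI (Event.imp a b)))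
          (CForm.box I hI b)}

/-- D8 (generalization): `[X ← x]φ` for `φ` a propositional tautology. -/
def AxD8 (S : Signature) : Set (CForm S) :=
  {φ | ∃ (I : S.V → Option S.Val) (hI : I ∈ S.Int) (e : Event S), e.Taut ∧
    φ = CForm.box I hI e}

/-- D9 (unique outcomes for `V − {X}`): `⟨Y ← y⟩true ∧ (⟨Y ← y⟩φ ⇒ [Y ← y]φ)`
for `Y = V − {X}`. -/
def AxD9 (S : Signature) : Set (CForm S) :=
  {φ | ∃ (I : S.V → Option S.Val) (hI : I ∈ S.Int) (X : S.V) (e : Event S),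
    I X = none ∧ (∀ Z, Z ≠ X → I Z ≠ none) ∧
    φ = CForm.and (CForm.dia I hI Event.tru)
          (CForm.imp (CForm.dia I hI e) (CForm.box I hI e))}

/-- Halpern's version of D9: `⟨Y ← y⟩true ∧ ⋁_{x ∈ R(X)} [Y ← y](X = x)`
for `Y = V − {X}`. -/
def AxHD9 (S : Signature) : Set (CForm S) :=
  {φ | ∃ (I : S.V → Option S.Val) (hI : I ∈ S.Int) (X : S.V)
      (l : List {x : S.Val // x ∈ S.RV X}),
    I X = none ∧ (∀ Z, Z ≠ X → I Z ≠ none) ∧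
    (∀ x : {x : S.Val // x ∈ S.RV X}, x ∈ l) ∧
    φ = CForm.and (CForm.dia I hI Event.tru)
          (CForm.bigOr (l.map fun x => CForm.box I hI (Event.prim X x.1 x.2)))}

/-- D10(a) (at least one outcome): `⟨Y ← y⟩true`. -/
def AxD10a (S : Signature) : Set (CForm S) :=
  {φ | ∃ (I : S.V → Option S.Val) (hI : I ∈ S.Int), φ = CForm.dia I hI Event.tru}

/-- D10(b) (at most one outcome): `⟨Y ← y⟩φ ⇒ [Y ← y]φ`. -/
def AxD10b (S : Signature) : Set (CForm S) :=
  {φ | ∃ (I : S.V → Option S.Val) (hI : I ∈ S.Int) (e : Event S),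
    φ = CForm.imp (CForm.dia I hI e) (CForm.box I hI e)}

/-! ### The axiom schema D6⁺ -/

/-- `X_{-i} = ȳ` : the conjunction of `X_j = g j` over the indices `j ≠ i`. -/
def Event.conjEqVec {k : ℕ} (Xs : Fin k → S.V)
    (g : ∀ j : Fin k, {x : S.Val // x ∈ S.RV (Xs j)}) (i : Fin k) : Event S :=
  Event.bigAnd (((List.finRange k).filter (fun j => j ≠ i)).map
    fun j => Event.prim (Xs j) (g j).1 (g j).2)

/-- A disjunct of the formula `X_i ⇝_{I',U₁,…,U_k,X₁,…,X_k} X_{−i}`: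
`[I; X_i ← x](X_{−i} = ȳ) ∧ [I; X_i ← x'](X_{−i} ≠ ȳ)`. -/
noncomputable def affComp {k : ℕ} (Xs : Fin k → S.V) (i : Fin k) (I : S.V → Option S.Val)
    (x x' : {v : S.Val // v ∈ S.RV (Xs i)})
    (hx : updInt I (Xs i) x.1 ∈ S.Int) (hx' : updInt I (Xs i) x'.1 ∈ S.Int)
    (g : ∀ j : Fin k, {v : S.Val // v ∈ S.RV (Xs j)}) : CForm S :=
  CForm.and (CForm.box (updInt I (Xs i) x.1) hx (Event.conjEqVec Xs g i))
    (CForm.box (updInt I (Xs i) x'.1) hx' (Event.not (Event.conjEqVec Xs g i)))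

/-- `φ` is (an instance of) the formula `X_i ⇝_{I',U₁,…,U_k,X₁,…,X_k} X_{−i}`. -/
def IsAffects {k : ℕ} (Xs : Fin k → S.V) (Us : Fin k → Set S.Val)
    (Is : Set (S.V → Option S.Val)) (i : Fin k) (φ : CForm S) : Prop :=
  ∃ l : List (CForm S),
    (∀ ψ ∈ l, ∃ (I : S.V → Option S.Val) (x x' : {v : S.Val // v ∈ S.RV (Xs i)})
        (hx : updInt I (Xs i) x.1 ∈ S.Int) (hx' : updInt I (Xs i) x'.1 ∈ S.Int)
        (g : ∀ j : Fin k, {v : S.Val // v ∈ S.RV (Xs j)}),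
        I ∈ Is ∧ x.1 ∈ Us i ∧ x'.1 ∈ Us i ∧ (∀ j, j ≠ i → (g j).1 ∈ Us j) ∧
        ψ = affComp Xs i I x x' hx hx' g) ∧
    (∀ (I : S.V → Option S.Val), I ∈ Is →
      ∀ (x x' : {v : S.Val // v ∈ S.RV (Xs i)})
        (hx : updInt I (Xs i) x.1 ∈ S.Int) (hx' : updInt I (Xs i) x'.1 ∈ S.Int)
        (g : ∀ j : Fin k, {v : S.Val // v ∈ S.RV (Xs j)}),
        x.1 ∈ Us i → x'.1 ∈ Us i → (∀ j, j ≠ i → (g j).1 ∈ Us j) →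
        affComp Xs i I x x' hx hx' g ∈ l) ∧
    φ = CForm.bigOr l

/-- D6⁺: `⋁_{i=1}^k ¬(X_i ⇝_{I',U₁,…,U_k,X₁,…,X_k} X_{−i})`, one instance for
each finite choice of variables `X₁,…,X_k`, finite value sets `U_i ⊆ R(X_i)`,
and finite set `I'` of allowed interventions. -/
def AxD6p (S : Signature) : Set (CForm S) :=
  {φ | ∃ (k : ℕ) (Xs : Fin k → S.V) (Us : Fin k → Set S.Val)
      (Is : Set (S.V → Option S.Val)) (fs : Fin k → CForm S),
    (∀ j, Us j ⊆ S.RV (Xs j)) ∧ (∀ j, (Us j).Finite) ∧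
    Is ⊆ S.Int ∧ Is.Finite ∧
    (∀ i, IsAffects Xs Us Is i (fs i)) ∧
    φ = CForm.bigOr (List.ofFn fun i => CForm.not (fs i))}

/-! ### Axiom systems and provability -/

def AXplus (S : Signature) : Set (CForm S) :=
  AxD0 S ∪ AxD1 S ∪ AxD2 S ∪ AxD3 S ∪ AxD4 S ∪ AxD5 S ∪ AxD7 S ∪ AxD8 S ∪ AxD9 S

def AXplusRec (S : Signature) : Set (CForm S) :=
  AxD0 S ∪ AxD1 S ∪ AxD2 S ∪ AxD3 S ∪ AxD4 S ∪ AxD6 S ∪ AxD7 S ∪ AxD8 S ∪ AxD9 S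
    ∪ AxD10a S ∪ AxD10b S

def AXbasic (S : Signature) : Set (CForm S) :=
  AxD0 S ∪ AxD1 S ∪ AxD2 S ∪ AxD4 S ∪ AxD7 S ∪ AxD8 S

def AXbasicRec (S : Signature) : Set (CForm S) := AXbasic S ∪ AxD6p S

def AXminus (S : Signature) : Set (CForm S) :=
  AxD0 S ∪ AxD2 S ∪ AxD3 S ∪ AxD6 S ∪ AxD7 S ∪ AxD8 S ∪ AxD10a S ∪ AxD10b S

def AXEQ (S : Signature) : Set (CForm S) :=
  AxD0 S ∪ AxD1 S ∪ AxD2 S ∪ AxD7 S ∪ AxD8 S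

/-- Provability from a set of axioms, with modus ponens. -/
inductive Provable (Ax : Set (CForm S)) : CForm S → Prop
  | ax {φ} : φ ∈ Ax → Provable Ax φ
  | mp {φ ψ} : Provable Ax (CForm.imp φ ψ) → Provable Ax φ → Provable Ax ψ

/-- Provability from a set of axioms, with modus ponens and the inference rule
D2⁺, relative to named variables `W`, named values `R'`, and a language `L`. -/
inductive ProvableStar (Ax : Set (CForm S)) (W : Set S.V) (R' : S.V → Set S.Val)
    (L : Set (CForm S)) : CForm S → Prop
  | ax {φ} : φ ∈ Ax → ProvableStar Ax W R' L φ
  | mp {φ ψ} : ProvableStar Ax W R' L (CForm.imp φ ψ) → ProvableStar Ax W R' L φ →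
      ProvableStar Ax W R' L ψ
  | d2plus {φ : CForm S} {I : S.V → Option S.Val} {hI : I ∈ S.Int} {ψ : Event S}
      {X : S.V} (hXW : X ∈ W)
      (l : List {x : S.Val // x ∈ S.RV X})
      (hsub : ∀ x ∈ l, x.1 ∈ R' X)
      (hmem : ∀ (x : S.Val) (hx : x ∈ S.RV X),
        (CForm.imp φ (CForm.box I hI ψ)).mentionsVal X x →
        (⟨x, hx⟩ : {x : S.Val // x ∈ S.RV X}) ∈ l)
      (hfresh : (∃ x ∈ R' X, ¬ (CForm.imp φ (CForm.box I hI ψ)).mentionsVal X x) →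
        ∃ x ∈ l, ¬ (CForm.imp φ (CForm.box I hI ψ)).mentionsVal X x.1)
      (hL : CForm.imp φ (CForm.box I hI (Event.not ψ)) ∈ L)
      (hprem : ProvableStar Ax W R' L
        (CForm.imp φ (CForm.bigAnd (l.map fun x =>
          CForm.box I hI (Event.imp ψ (Event.not (Event.prim X x.1 x.2)))))))
      : ProvableStar Ax W R' L (CForm.imp φ (CForm.box I hI (Event.not ψ)))

/-! ### Properties of GSEMs -/

/-- Coherence: if `v` is an outcome of `X ← x` and `v` agrees with a finite
extension `X ← x; Y ← y` of the intervention, then `v` is an outcome of the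
extended intervention. -/
def GSEM.Coherent (M : GSEM S) : Prop :=
  ∀ (I₁ : S.V → Option S.Val) (h₁ : I₁ ∈ S.Int) (I₂ : S.V → Option S.Val)
    (h₂ : I₂ ∈ S.Int),
    (∀ X x, I₁ X = some x → I₂ X = some x) →
    {X | I₁ X = none ∧ I₂ X ≠ none}.Finite →
    ∀ (u : Context S) (v : Assignment S), v ∈ M.F I₁ h₁ u →
      (∀ X x, I₂ X = some x → v.1 X = x) → v ∈ M.F I₂ h₂ u

/-- Condition Acyc1 for a GSEM, a context, and a strict order on the variables. -/
def GSEM.Acyc1At (M : GSEM S) (u : Context S) (lt : S.V → S.V → Prop) : Prop :=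
  ∀ (X : S.V) (x x' : S.Val), x ∈ S.RV X → x' ∈ S.RV X →
    ∀ (I : S.V → Option S.Val), I ∈ S.Int →
      ∀ (hx : updInt I X x ∈ S.Int) (hx' : updInt I X x' ∈ S.Int),
        restrictSet (M.F (updInt I X x) hx u) {Y | lt Y X}
          = restrictSet (M.F (updInt I X x') hx' u) {Y | lt Y X}

/-- An acyclic GSEM: for each context there is a total order on the endogenous
variables satisfying Acyc1. -/
def GSEM.Acyclic (M : GSEM S) : Prop :=
  ∀ u : Context S, ∃ lt : S.V → S.V → Prop, IsStrictTotalOrder S.V lt ∧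
    M.Acyc1At u lt

/-! ### Consistency and acceptability -/

/-- A set of formulas is consistent with a provability notion `Pr` if the
negation of the conjunction of no finite subset is provable. -/
def Consistent (Pr : CForm S → Prop) (C : Set (CForm S)) : Prop :=
  ∀ l : List (CForm S), (∀ ψ ∈ l, ψ ∈ C) → ¬ Pr (CForm.not (CForm.bigAnd l))

def MaxConsistent (Pr : CForm S → Prop) (C : Set (CForm S)) : Prop :=
  Consistent Pr C ∧ ∀ ψ ∉ C, ¬ Consistent Pr (insert ψ C)

/-- `C` is acceptable for `⟨Y ← y⟩φ` with respect to `Z`: some conjunctive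
formula `ψ` extends the conjuncts of `φ`, contains a conjunct `Z = z` with `z`
a named value, and `⟨Y ← y⟩ψ ∈ C`. -/
def AcceptableFor (C : Set (CForm S)) (I : S.V → Option S.Val) (hI : I ∈ S.Int)
    (φ : Event S) (R' : S.V → Set S.Val) (Z : S.V) : Prop :=
  ∃ ψ : Event S, ψ.Conjunctive ∧ φ.conjuncts ⊆ ψ.conjuncts ∧
    (∃ (z : S.Val) (hz : z ∈ S.RV Z), z ∈ R' Z ∧ Event.prim Z z hz ∈ ψ.conjuncts) ∧
    CForm.dia I hI ψ ∈ C

end Causal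

namespace Causal

variable {S : Signature}

/-- Condition Acyc1 for a SEM `M`, a context `u` and an order `lt` on the
endogenous variables: for all `X`, `x, x' ∈ R(X)` and interventions `I`,
`M(u, I; X ← x)[V_{≺ X}] = M(u, I; X ← x')[V_{≺ X}]`. -/
def SEM.Acyc1At (M : SEM S) (u : Context S) (lt : S.V → S.V → Prop) : Prop :=
  ∀ (X : S.V) (x x' : S.Val), x ∈ S.RV X → x' ∈ S.RV X →
    ∀ I : S.V → Option S.Val, ValidInt S I →
      restrictSet (M.outcomes u (updInt I X x)) {Y | lt Y X}
        = restrictSet (M.outcomes u (updInt I X x')) {Y | lt Y X}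

/-- Condition Acyc2 for a SEM `M`, a context `u` and an order `lt`: if
`Y ≺ X` then for all interventions `I` and `x, x' ∈ R(X)`,
`M(u, I; X ← x)[Y] = M(u, I; X ← x')[Y]`. -/
def SEM.Acyc2At (M : SEM S) (u : Context S) (lt : S.V → S.V → Prop) : Prop :=
  ∀ Y X : S.V, lt Y X → ∀ x x' : S.Val, x ∈ S.RV X → x' ∈ S.RV X →
    ∀ I : S.V → Option S.Val, ValidInt S I →
      projSet (M.outcomes u (updInt I X x)) Y
        = projSet (M.outcomes u (updInt I X x')) Y

section Aux

variable {S : Signature}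

private lemma updInt_valid {I : S.V → Option S.Val} (hI : ValidInt S I) {X : S.V}
    {x : S.Val} (hx : x ∈ S.RV X) : ValidInt S (updInt I X x) := by
  intro Y y hy
  unfold updInt at hy
  by_cases h : Y = X
  · rw [if_pos h] at hy
    rw [h, ← Option.some.inj hy]
    exact hx
  · rw [if_neg h] at hy
    exact hI Y y hy

open Classical in
/-- Key single-step lemma: if `v` satisfies the equation of `Y` and `Y ≺ Z`,
then changing the value of `Z` does not change the value of `F_Y` at `v`. -/
private lemma F_update_high (M : SEM S) (u : Context S) {lt : S.V → S.V → Prop}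
    (hlt : IsStrictTotalOrder S.V lt) (h2 : M.Acyc2At u lt) {Y Z : S.V} (hYZ : lt Y Z)
    (v : Assignment S) (hv : v.1 Y = M.F Y u.1 v.1)
    {z' : S.Val} (hz' : z' ∈ S.RV Z) :
    M.F Y u.1 (Function.update v.1 Z z') = v.1 Y := by
  classical
  have hYZne : Y ≠ Z := fun h => absurd (h ▸ hYZ) (hlt.irrefl Z)
  set I₃ : S.V → Option S.Val := fun W => if W = Y then none else some (v.1 W) with hI₃
  have hI₃Y : I₃ Y = none := by
    rw [hI₃]
    show (if Y = Y then none else some (v.1 Y)) = none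
    rw [if_pos rfl]
  have hI₃W : ∀ W, W ≠ Y → I₃ W = some (v.1 W) := by
    intro W hW
    rw [hI₃]
    show (if W = Y then none else some (v.1 W)) = some (v.1 W)
    rw [if_neg hW]
  have hvalid : ValidInt S I₃ := by
    intro W w hw
    by_cases hWY : W = Y
    · rw [hWY, hI₃Y] at hw; cases hw
    · rw [hI₃W W hWY] at hw
      rw [← Option.some.inj hw]
      exact v.2 W
  have hvmem : v ∈ M.outcomes u (updInt I₃ Z (v.1 Z)) := by
    intro W
    constructor
    · intro w hw
      unfold updInt at hw
      by_cases hWZ : W = Z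
      · rw [if_pos hWZ] at hw
        rw [hWZ]
        exact Option.some.inj hw
      · rw [if_neg hWZ] at hw
        by_cases hWY : W = Y
        · rw [hWY, hI₃Y] at hw; cases hw
        · rw [hI₃W W hWY] at hw
          exact Option.some.inj hw
    · intro hnone
      unfold updInt at hnone
      by_cases hWZ : W = Z
      · rw [if_pos hWZ] at hnone; cases hnone
      · rw [if_neg hWZ] at hnone
        by_cases hWY : W = Y
        · rw [hWY]; exact hv
        · rw [hI₃W W hWY] at hnone; cases hnone
  have hproj := h2 Y Z hYZ (v.1 Z) z' (v.2 Z) hz' I₃ hvalid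
  have hmem : v.1 Y ∈ projSet (M.outcomes u (updInt I₃ Z (v.1 Z))) Y :=
    ⟨v, hvmem, rfl⟩
  rw [hproj] at hmem
  obtain ⟨t, ht, htY⟩ := hmem
  have hagree : ∀ W, W ≠ Y → t.1 W = Function.update v.1 Z z' W := by
    intro W hW
    by_cases hWZ : W = Z
    · rw [hWZ, Function.update_self]
      exact (ht Z).1 z' (by unfold updInt; rw [if_pos rfl])
    · rw [Function.update_of_ne hWZ]
      refine (ht W).1 (v.1 W) ?_
      unfold updInt
      rw [if_neg hWZ]
      exact hI₃W W hW
  have hteq : t.1 Y = M.F Y u.1 t.1 := by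
    apply (ht Y).2
    unfold updInt
    rw [if_neg hYZne]
    exact hI₃Y
  calc M.F Y u.1 (Function.update v.1 Z z')
      = M.F Y u.1 t.1 := (M.F_indep_self Y u.1 t.1 _ hagree).symm
    _ = t.1 Y := hteq.symm
    _ = v.1 Y := htY

/-- Multi-coordinate version: if `v` satisfies `Y`'s equation and `w` agrees
with `v` on all coordinates not strictly above `Y`, then `F_Y` takes the same
value at `w`. -/
private lemma F_agree_low (hfinV : Finite S.V) (M : SEM S) (u : Context S)
    {lt : S.V → S.V → Prop} (hlt : IsStrictTotalOrder S.V lt) (h2 : M.Acyc2At u lt)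
    (Y : S.V) :
    ∀ (n : ℕ) (v w : Assignment S), v.1 Y = M.F Y u.1 v.1 →
      (∀ W, ¬ lt Y W → w.1 W = v.1 W) →
      {W | w.1 W ≠ v.1 W}.ncard ≤ n →
      M.F Y u.1 w.1 = v.1 Y := by
  classical
  intro n
  induction n with
  | zero =>
    intro v w hv hag hcard
    have hf : {W | w.1 W ≠ v.1 W}.Finite := Set.toFinite _
    have hempty : {W | w.1 W ≠ v.1 W} = ∅ :=
      (Set.ncard_eq_zero hf).mp (Nat.le_zero.mp hcard)
    have heq : w.1 = v.1 := by
      funext W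
      by_contra h
      exact absurd (Set.eq_empty_iff_forall_notMem.mp hempty W) (fun hn => hn h)
    rw [heq, ← hv]
  | succ n ih =>
    intro v w hv hag hcard
    by_cases hD : {W | w.1 W ≠ v.1 W} = ∅
    · have heq : w.1 = v.1 := by
        funext W
        by_contra h
        exact absurd (Set.eq_empty_iff_forall_notMem.mp hD W) (fun hn => hn h)
      rw [heq, ← hv]
    · obtain ⟨Z, hZ⟩ := Set.nonempty_iff_ne_empty.mpr hD
      have hZmem : w.1 Z ≠ v.1 Z := hZ
      have hYZ : lt Y Z := by
        by_contra h
        exact hZmem (hag Z h)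
      have hZne : Z ≠ Y := fun h => absurd (h ▸ hYZ) (hlt.irrefl Y)
      have hv₁mem : ∀ W, Function.update v.1 Z (w.1 Z) W ∈ S.RV W := by
        intro W
        by_cases hWZ : W = Z
        · rw [hWZ, Function.update_self]; exact w.2 Z
        · rw [Function.update_of_ne hWZ]; exact v.2 W
      have h1 : M.F Y u.1 (Function.update v.1 Z (w.1 Z)) = v.1 Y :=
        F_update_high M u hlt h2 hYZ v hv (w.2 Z)
      have hres := ih ⟨Function.update v.1 Z (w.1 Z), hv₁mem⟩ w
        (by
          show Function.update v.1 Z (w.1 Z) Y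
            = M.F Y u.1 (Function.update v.1 Z (w.1 Z))
          rw [Function.update_of_ne hZne.symm, h1])
        (by
          intro W hW
          show w.1 W = Function.update v.1 Z (w.1 Z) W
          have hWZ : W ≠ Z := fun h => hW (h ▸ hYZ)
          rw [Function.update_of_ne hWZ]
          exact hag W hW)
        (by
          show {W | w.1 W ≠ Function.update v.1 Z (w.1 Z) W}.ncard ≤ n
          have hsub : {W | w.1 W ≠ Function.update v.1 Z (w.1 Z) W}
              = {W | w.1 W ≠ v.1 W} \ {Z} := by
            ext W
            simp only [Set.mem_setOf_eq, Set.mem_diff, Set.mem_singleton_iff]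
            by_cases hWZ : W = Z
            · rw [hWZ, Function.update_self]
              simp
            · rw [Function.update_of_ne hWZ]
              simp [hWZ]
          rw [hsub]
          have hlt' : ({W | w.1 W ≠ v.1 W} \ {Z}).ncard < {W | w.1 W ≠ v.1 W}.ncard :=
            Set.ncard_diff_singleton_lt_of_mem hZ (Set.toFinite _)
          omega)
      rw [hres]
      show Function.update v.1 Z (w.1 Z) Y = v.1 Y
      exact Function.update_of_ne hZne.symm _ _

/-- Base case: no free variable above `X`. -/
private lemma shift_empty (hfinV : Finite S.V) (M : SEM S) (u : Context S)
    {lt : S.V → S.V → Prop} (hlt : IsStrictTotalOrder S.V lt) (h2 : M.Acyc2At u lt)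
    {I : S.V → Option S.Val} (hI : ValidInt S I) {X : S.V} {x x' : S.Val}
    (hx : x ∈ S.RV X) (hx' : x' ∈ S.RV X)
    (hA : ∀ Z, I Z = none → Z ≠ X → ¬ lt X Z)
    {v : Assignment S} (hv : v ∈ M.outcomes u (updInt I X x)) :
    ∃ w ∈ M.outcomes u (updInt I X x'), ∀ W, W ≠ X → w.1 W = v.1 W := by
  classical
  have hwmem : ∀ W, Function.update v.1 X x' W ∈ S.RV W := by
    intro W
    by_cases hWX : W = X
    · rw [hWX, Function.update_self]; exact hx'
    · rw [Function.update_of_ne hWX]; exact v.2 W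
  refine ⟨⟨Function.update v.1 X x', hwmem⟩, ?_, ?_⟩
  · intro W
    constructor
    · intro y hy
      unfold updInt at hy
      show Function.update v.1 X x' W = y
      by_cases hWX : W = X
      · rw [if_pos hWX] at hy
        rw [hWX, Function.update_self]
        exact Option.some.inj hy
      · rw [if_neg hWX] at hy
        rw [Function.update_of_ne hWX]
        exact (hv W).1 y (by unfold updInt; rw [if_neg hWX]; exact hy)
    · intro hnone
      unfold updInt at hnone
      by_cases hWX : W = X
      · rw [if_pos hWX] at hnone; cases hnone
      · rw [if_neg hWX] at hnone
        have hIW : I W = none := hnone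
        have hWlt : lt W X := by
          rcases (or_iff_not_imp_left.2 fun a => or_iff_not_imp_right.2 fun b => hlt.trichotomous W X a b) with h | h | h
          · exact h
          · exact absurd h hWX
          · exact absurd h (hA W hIW hWX)
        have hveq : v.1 W = M.F W u.1 v.1 := by
          apply (hv W).2
          unfold updInt
          rw [if_neg hWX]
          exact hIW
        have hF := F_agree_low hfinV M u hlt h2 W
          ({W' | Function.update v.1 X x' W' ≠ v.1 W'}.ncard)
          v ⟨Function.update v.1 X x', hwmem⟩ hveq
          (by
            intro W' hW'
            show Function.update v.1 X x' W' = v.1 W'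
            have hW'X : W' ≠ X := fun h => hW' (h ▸ hWlt)
            exact Function.update_of_ne hW'X _ _)
          le_rfl
        show Function.update v.1 X x' W = M.F W u.1 (Function.update v.1 X x')
        rw [Function.update_of_ne hWX]
        exact hF.symm
  · intro W hWX
    show Function.update v.1 X x' W = v.1 W
    exact Function.update_of_ne hWX _ _

/-- Main construction: changing the value of `X` in an intervention, we can find
an outcome of the new intervention agreeing with the old one off `X` and the
free variables above `X`. -/
private lemma exists_shift (hfinV : Finite S.V) (M : SEM S) (u : Context S)
    {lt : S.V → S.V → Prop} (hlt : IsStrictTotalOrder S.V lt) (h2 : M.Acyc2At u lt) :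
    ∀ (n : ℕ) (I : S.V → Option S.Val), ValidInt S I →
      ∀ (X : S.V) (x x' : S.Val), x ∈ S.RV X → x' ∈ S.RV X →
      ∀ v ∈ M.outcomes u (updInt I X x),
      {Z | I Z = none ∧ Z ≠ X ∧ lt X Z}.ncard ≤ n →
      ∃ w ∈ M.outcomes u (updInt I X x'),
        ∀ W, W ≠ X → ¬ (I W = none ∧ lt X W) → w.1 W = v.1 W := by
  classical
  intro n
  induction n with
  | zero =>
    intro I hI X x x' hx hx' v hv hcard
    have hf : {Z | I Z = none ∧ Z ≠ X ∧ lt X Z}.Finite := Set.toFinite _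
    have hempty : {Z | I Z = none ∧ Z ≠ X ∧ lt X Z} = ∅ :=
      (Set.ncard_eq_zero hf).mp (Nat.le_zero.mp hcard)
    have hA : ∀ Z, I Z = none → Z ≠ X → ¬ lt X Z := by
      intro Z h1' h2' h3'
      exact absurd (Set.eq_empty_iff_forall_notMem.mp hempty Z) (fun hn => hn ⟨h1', h2', h3'⟩)
    obtain ⟨w, hw, hag⟩ := shift_empty hfinV M u hlt h2 hI hx hx' hA hv
    exact ⟨w, hw, fun W hWX _ => hag W hWX⟩
  | succ n ih =>
    intro I hI X x x' hx hx' v hv hcard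
    by_cases hD : {Z | I Z = none ∧ Z ≠ X ∧ lt X Z} = ∅
    · have hA : ∀ Z, I Z = none → Z ≠ X → ¬ lt X Z := by
        intro Z h1' h2' h3'
        exact absurd (Set.eq_empty_iff_forall_notMem.mp hD Z) (fun hn => hn ⟨h1', h2', h3'⟩)
      obtain ⟨w, hw, hag⟩ := shift_empty hfinV M u hlt h2 hI hx hx' hA hv
      exact ⟨w, hw, fun W hWX _ => hag W hWX⟩
    · obtain ⟨Z, hZnone, hZX, hXZ⟩ := Set.nonempty_iff_ne_empty.mpr hD
      -- Step 1: fix Z at its current value, apply IH at X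
      have hI' : ValidInt S (updInt I Z (v.1 Z)) := updInt_valid hI (v.2 Z)
      have hvmem' : v ∈ M.outcomes u (updInt (updInt I Z (v.1 Z)) X x) := by
        intro W
        constructor
        · intro y hy
          unfold updInt at hy
          by_cases hWX : W = X
          · rw [if_pos hWX] at hy
            rw [hWX, ← Option.some.inj hy]
            exact (hv X).1 x (by unfold updInt; rw [if_pos rfl])
          · rw [if_neg hWX] at hy
            by_cases hWZ : W = Z
            · rw [if_pos hWZ] at hy
              rw [hWZ]
              exact Option.some.inj hy
            · rw [if_neg hWZ] at hy
              exact (hv W).1 y (by unfold updInt; rw [if_neg hWX]; exact hy)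
        · intro hnone
          unfold updInt at hnone
          by_cases hWX : W = X
          · rw [if_pos hWX] at hnone; cases hnone
          · rw [if_neg hWX] at hnone
            by_cases hWZ : W = Z
            · rw [if_pos hWZ] at hnone; cases hnone
            · rw [if_neg hWZ] at hnone
              exact (hv W).2 (by unfold updInt; rw [if_neg hWX]; exact hnone)
      have hA'eq : {W | updInt I Z (v.1 Z) W = none ∧ W ≠ X ∧ lt X W}
          = {Z' | I Z' = none ∧ Z' ≠ X ∧ lt X Z'} \ {Z} := by
        ext W
        simp only [Set.mem_setOf_eq, Set.mem_diff, Set.mem_singleton_iff]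
        unfold updInt
        by_cases hWZ : W = Z
        · rw [if_pos hWZ]
          simp [hWZ]
        · rw [if_neg hWZ]
          simp [hWZ]
      have hcard' : {W | updInt I Z (v.1 Z) W = none ∧ W ≠ X ∧ lt X W}.ncard ≤ n := by
        rw [hA'eq]
        have := Set.ncard_diff_singleton_lt_of_mem
          (show Z ∈ {Z' | I Z' = none ∧ Z' ≠ X ∧ lt X Z'} from ⟨hZnone, hZX, hXZ⟩)
          (Set.toFinite _)
        omega
      obtain ⟨w', hw', hag'⟩ := ih (updInt I Z (v.1 Z)) hI' X x x' hx hx' v hvmem' hcard'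
      -- Step 2: now release Z, moving it to its correct value
      have hI₃ : ValidInt S (updInt I X x') := updInt_valid hI hx'
      have hcomm : updInt (updInt I X x') Z (v.1 Z) = updInt (updInt I Z (v.1 Z)) X x' := by
        funext W
        unfold updInt
        by_cases hWZ : W = Z
        · rw [if_pos hWZ, if_neg (hWZ ▸ hZX), if_pos hWZ]
        · rw [if_neg hWZ]
          by_cases hWX : W = X
          · rw [if_pos hWX, if_pos hWX]
          · rw [if_neg hWX, if_neg hWX, if_neg hWZ]
      have hw'mem : w' ∈ M.outcomes u (updInt (updInt I X x') Z (v.1 Z)) := by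
        rw [hcomm]; exact hw'
      have hz₁ : M.F Z u.1 w'.1 ∈ S.RV Z := M.F_range Z u.1 w'.1
      have hI₃Z : updInt I X x' Z = none := by
        unfold updInt; rw [if_neg hZX]; exact hZnone
      have hBsub : {W | updInt I X x' W = none ∧ W ≠ Z ∧ lt Z W}
          ⊆ {Z' | I Z' = none ∧ Z' ≠ X ∧ lt X Z'} \ {Z} := by
        rintro W ⟨h1', h2', h3'⟩
        have hWX : W ≠ X := by
          rintro rfl
          unfold updInt at h1'
          rw [if_pos rfl] at h1'
          cases h1'
        have hIW : I W = none := by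
          unfold updInt at h1'
          rw [if_neg hWX] at h1'
          exact h1'
        exact ⟨⟨hIW, hWX, hlt.trans X Z W hXZ h3'⟩, h2'⟩
      have hcardB : {W | updInt I X x' W = none ∧ W ≠ Z ∧ lt Z W}.ncard ≤ n := by
        have h1' := Set.ncard_le_ncard hBsub (Set.toFinite _)
        have h2' := Set.ncard_diff_singleton_lt_of_mem
          (show Z ∈ {Z' | I Z' = none ∧ Z' ≠ X ∧ lt X Z'} from ⟨hZnone, hZX, hXZ⟩)
          (Set.toFinite _)
        omega
      obtain ⟨w, hw, hag''⟩ := ih (updInt I X x') hI₃ Z (v.1 Z) (M.F Z u.1 w'.1)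
        (v.2 Z) hz₁ w' hw'mem hcardB
      have hwZ : w.1 Z = M.F Z u.1 w'.1 :=
        (hw Z).1 _ (by unfold updInt; rw [if_pos rfl])
      have hwmem : w ∈ M.outcomes u (updInt I X x') := by
        intro W
        constructor
        · intro y hy
          have hWZ : W ≠ Z := by
            rintro rfl; rw [hI₃Z] at hy; cases hy
          exact (hw W).1 y (by unfold updInt; rw [if_neg hWZ]; exact hy)
        · intro hnone
          by_cases hWZ : W = Z
          · rw [hWZ]
            -- need w.1 Z = M.F Z u.1 w.1
            have hv₂mem : ∀ W', Function.update w'.1 Z (M.F Z u.1 w'.1) W' ∈ S.RV W' := by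
              intro W'
              by_cases hW'Z : W' = Z
              · rw [hW'Z, Function.update_self]; exact hz₁
              · rw [Function.update_of_ne hW'Z]; exact w'.2 W'
            have hv₂Z : Function.update w'.1 Z (M.F Z u.1 w'.1) Z = M.F Z u.1 w'.1 :=
              Function.update_self _ _ _
            have hv₂eq : Function.update w'.1 Z (M.F Z u.1 w'.1) Z
                = M.F Z u.1 (Function.update w'.1 Z (M.F Z u.1 w'.1)) := by
              rw [hv₂Z]
              exact M.F_indep_self Z u.1 w'.1 _
                (fun W' hW' => (Function.update_of_ne hW' _ _).symm)
            have hagw : ∀ W', ¬ lt Z W' →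
                w.1 W' = Function.update w'.1 Z (M.F Z u.1 w'.1) W' := by
              intro W' hW'
              by_cases hW'Z : W' = Z
              · rw [hW'Z, Function.update_self]
                exact hwZ
              · rw [Function.update_of_ne hW'Z]
                apply hag'' W' hW'Z
                rintro ⟨_, hc⟩
                exact hW' hc
            have hF := F_agree_low hfinV M u hlt h2 Z
              ({W' | w.1 W' ≠ Function.update w'.1 Z (M.F Z u.1 w'.1) W'}.ncard)
              ⟨Function.update w'.1 Z (M.F Z u.1 w'.1), hv₂mem⟩ w hv₂eq hagw le_rfl
            rw [hwZ, hF]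
            exact hv₂Z.symm
          · exact (hw W).2 (by unfold updInt; rw [if_neg hWZ]; exact hnone)
      refine ⟨w, hwmem, ?_⟩
      intro W hWX hWcond
      have hWZ : W ≠ Z := by
        rintro rfl; exact hWcond ⟨hZnone, hXZ⟩
      have hstep1 : w.1 W = w'.1 W := by
        apply hag'' W hWZ
        rintro ⟨hc1, hc2⟩
        have hIW : I W = none := by
          unfold updInt at hc1
          rw [if_neg hWX] at hc1
          exact hc1
        exact hWcond ⟨hIW, hlt.trans X Z W hXZ hc2⟩
      have hstep2 : w'.1 W = v.1 W := by
        apply hag' W hWX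
        rintro ⟨hc1, hc2⟩
        unfold updInt at hc1
        by_cases hWZ' : W = Z
        · exact hWZ hWZ'
        · rw [if_neg hWZ'] at hc1
          exact hWcond ⟨hc1, hc2⟩
      rw [hstep1, hstep2]

end Aux

/-- Let `M` be a SEM, `u` a fixed context, and `≺_u` a total
order on the endogenous variables. Then `≺_u` satisfies Acyc1 for `M` in
context `u` iff it satisfies Acyc2 for `M` in context `u`. -/
theorem sem_acyc1_iff_acyc2 (S : Signature) (hfin : S.IsFinite) (M : SEM S)
    (u : Context S) (lt : S.V → S.V → Prop) (hlt : IsStrictTotalOrder S.V lt) :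
    M.Acyc1At u lt ↔ M.Acyc2At u lt := by
  have hfinV : Finite S.V := hfin.2.1
  constructor
  · -- Acyc1 → Acyc2
    intro h1 Y X hYX x x' hx hx' I hI
    have h := h1 X x x' hx hx' I hI
    have key : ∀ T : Set (Assignment S),
        projSet T Y = (fun f : ({W | lt W X} : Set S.V) → S.Val => f ⟨Y, hYX⟩) ''
          restrictSet T {W | lt W X} := by
      intro T
      ext a
      constructor
      · rintro ⟨v, hv, rfl⟩
        exact ⟨_, ⟨v, hv, rfl⟩, rfl⟩
      · rintro ⟨f, ⟨v, hv, rfl⟩, rfl⟩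
        exact ⟨v, hv, rfl⟩
    rw [key, key, h]
  · -- Acyc2 → Acyc1
    intro h2 X x x' hx hx' I hI
    have main : ∀ (y y' : S.Val), y ∈ S.RV X → y' ∈ S.RV X →
        restrictSet (M.outcomes u (updInt I X y)) {Y | lt Y X}
          ⊆ restrictSet (M.outcomes u (updInt I X y')) {Y | lt Y X} := by
      intro y y' hy hy'
      rintro f ⟨v, hv, rfl⟩
      obtain ⟨w, hw, hag⟩ := exists_shift hfinV M u hlt h2
        ({Z | I Z = none ∧ Z ≠ X ∧ lt X Z}.ncard) I hI X y y' hy hy' v hv le_rfl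
      refine ⟨w, hw, ?_⟩
      funext Y
      have hYX : lt Y.1 X := Y.2
      have hYne : Y.1 ≠ X := by
        rintro h
        rw [h] at hYX
        exact absurd hYX (hlt.irrefl X)
      show w.1 Y.1 = v.1 Y.1
      exact hag Y.1 hYne (fun ⟨_, hc⟩ => absurd (hlt.trans _ _ _ hYX hc) (hlt.irrefl Y.1))
    exact Set.Subset.antisymm (main x x' hx hx') (main x' x hx' hx)

end Causal
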